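/- arXiv:2011.05064 — 2 statements merged into one kernel-verified Lean document; each statement's English description precedes it below -/
import Mathlib

section
/- If H₀ ≡ 0 and Q₀ ≡ 0 and each subsequent pair (H_i, Q_i) is obtained from (H_{i-1}, Q_{i-1}) by a coupled Q-learning/belief-map update at some transition (s_t, a_t, s_{t+1}) with reward r_t = R(s_t, a_t), then for every iteration i and every state-action pair (s,a), ⟨H_i(s,a), R⟩ = Q_i(s,a). -/
/-- Inner product of a belief-map entry with the reward map. -/
noncomputable def ip {S A : Type} [Fintype S] [Fintype A]
    (v R : S × A → ℝ) : ℝ := ∑ q, v q * R q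

/-- With zero initialization, the coupled Q-learning / belief-map updates keep the
belief map consistent with the Q-table at every iteration. -/
theorem consistency_all_iterations {S A : Type} [Fintype S] [Fintype A]
    [DecidableEq S] [DecidableEq A]
    (R : S × A → ℝ) (α γ : ℝ)
    (Q : ℕ → S × A → ℝ) (H : ℕ → S × A → S × A → ℝ)
    (st : ℕ → S) (at_ : ℕ → A) (st' : ℕ → S) (m : ℕ → A)
    (hQ0 : Q 0 = fun _ => 0) (hH0 : H 0 = fun _ _ => 0)
    (hm : ∀ i (a : A), Q i (st' i, a) ≤ Q i (st' i, m i))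
    (hQ : ∀ i, Q (i + 1) = fun p => if p = (st i, at_ i) then
        (1 - α) * Q i (st i, at_ i) + α * (R (st i, at_ i) + γ * Q i (st' i, m i))
      else Q i p)
    (hH : ∀ i, H (i + 1) = fun p => if p = (st i, at_ i) then
        fun q => (1 - α) * H i (st i, at_ i) q +
          α * ((if q = (st i, at_ i) then (1 : ℝ) else 0) + γ * H i (st' i, m i) q)
      else H i p) :
    ∀ i (p : S × A), ip (H i p) R = Q i p := by
  intro i
  induction i with
  | zero =>
    intro p
    simp [hQ0, hH0, ip]
  | succ i ih =>
    intro p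
    rw [hQ i, hH i]
    by_cases h : p = (st i, at_ i)
    · subst h
      simp only [if_pos rfl, if_true]
      have key : ip (fun q => (1 - α) * H i (st i, at_ i) q +
          α * ((if q = (st i, at_ i) then (1 : ℝ) else 0) + γ * H i (st' i, m i) q)) R
          = (1 - α) * ip (H i (st i, at_ i)) R +
            α * (R (st i, at_ i) + γ * ip (H i (st' i, m i)) R) := by
        simp only [ip]
        have step : ∀ q : S × A,
            ((1 - α) * H i (st i, at_ i) q +
              α * ((if q = (st i, at_ i) then (1 : ℝ) else 0) + γ * H i (st' i, m i) q)) * R q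
            = (1 - α) * (H i (st i, at_ i) q * R q) +
              (α * γ) * (H i (st' i, m i) q * R q) +
              (if q = (st i, at_ i) then α * R q else 0) := by
          intro q
          by_cases hq : q = (st i, at_ i) <;> simp [hq] <;> ring
        rw [Finset.sum_congr rfl fun q _ => step q]
        rw [Finset.sum_add_distrib, Finset.sum_add_distrib, ← Finset.mul_sum,
          ← Finset.mul_sum, Fintype.sum_ite_eq' (st i, at_ i) (fun q => α * R q)]
        ring
      rw [key, ih, ih]
    · simp only [if_neg h]
      exact ih p
end

section
/- Suppose ⟨H_{i-1}(s,a), R⟩ = Q_{i-1}(s,a) for all (s,a). Given a finite trajectory (s_{t'}, a_{t'}), …, (s_T, a_T), if the Monte Carlo updates Q_i(s_{t'},a_{t'}) = (1−α)Q_{i-1}(s_{t'},a_{t'}) + α Σ_{t=t'}^{T} γ^t R(s_t, a_t) and H_i(s_{t'},a_{t'}) = (1−α)H_{i-1}(s_{t'},a_{t'}) + α Σ_{t=t'}^{T} γ^t 1_{(s_t,a_t)} are performed (other entries unchanged), then ⟨H_i(s,a), R⟩ = Q_i(s,a) for all (s,a). -/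
/-- The coupled Monte Carlo update preserves consistency of the belief map. -/
theorem mc_consistency_step {S A : Type} [Fintype S] [Fintype A]
    [DecidableEq S] [DecidableEq A]
    (R Q : S × A → ℝ) (H : S × A → S × A → ℝ) (α γ : ℝ)
    (τ : ℕ → S × A) (t' T : ℕ) (ht : t' ≤ T)
    (hcons : ∀ p : S × A, ip (H p) R = Q p)
    (Q' : S × A → ℝ)
    (hQ' : Q' = fun p => if p = τ t' then
        (1 - α) * Q (τ t') + α * ∑ t ∈ Finset.Icc t' T, γ ^ t * R (τ t)
      else Q p)
    (H' : S × A → S × A → ℝ)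
    (hH' : H' = fun p => if p = τ t' then
        fun q => (1 - α) * H (τ t') q +
          α * ∑ t ∈ Finset.Icc t' T, γ ^ t * (if q = τ t then (1 : ℝ) else 0)
      else H p) :
    ∀ p : S × A, ip (H' p) R = Q' p := by
  intro p
  subst hQ' hH'
  simp only [ip]
  by_cases hp : p = τ t'
  · rw [hp]
    simp only [if_pos rfl, if_true]
    have step : ∀ q : S × A,
        ((1 - α) * H (τ t') q +
          α * ∑ t ∈ Finset.Icc t' T, γ ^ t * (if q = τ t then (1:ℝ) else 0)) * R q
        = (1 - α) * (H (τ t') q * R q) +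
          α * ∑ t ∈ Finset.Icc t' T, γ ^ t * (if q = τ t then (1:ℝ) else 0) * R q := by
      intro q
      simp only [add_mul, Finset.sum_mul, mul_assoc]
    rw [Finset.sum_congr rfl fun q _ => step q, Finset.sum_add_distrib,
      ← Finset.mul_sum, ← Finset.mul_sum]
    have h1 : ∑ q, H (τ t') q * R q = Q (τ t') := hcons (τ t')
    rw [h1]
    congr 1
    congr 1
    rw [Finset.sum_comm]
    apply Finset.sum_congr rfl
    intro t _
    calc ∑ q : S × A, γ ^ t * (if q = τ t then (1:ℝ) else 0) * R q
        = ∑ q : S × A, (if q = τ t then γ ^ t * R (τ t) else 0) := by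
          apply Finset.sum_congr rfl
          intro q _
          by_cases h : q = τ t <;> simp [h]
      _ = γ ^ t * R (τ t) := by simp
  · simp only [if_neg hp]
    exact hcons p
end
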